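/- For the vector field Q(z,w) = (−z², −(z²+zw)) on ℂ², the integral curve through a point (z₀,w₀) with z₀ ∉ ℝ converges to the origin as t → ±∞ tangentially to the direction [0:1], i.e. γ(t) → (0,0) and z(t)/w(t) → 0. -/

import Mathlib

open Filter Complex intervalIntegral

/-- For the quadratic vector field `Q(z,w) = (−z², −(z²+zw))` on `ℂ²` (type
`(1₁₀)`), every integral curve through a point `(z₀,w₀)` with `z₀ ∉ ℝ` converges to
the origin as `t → ±∞` tangentially to the direction `[0:1]`: both components tend
to `0` and `z(t)/w(t) → 0`. -/
theorem type_one_one_zero_dynamics (z₀ w₀ : ℂ) (hz₀ : z₀.im ≠ 0)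
    (z w : ℝ → ℂ) (hz0 : z 0 = z₀) (hw0 : w 0 = w₀)
    (hodez : ∀ t : ℝ, HasDerivAt z (-(z t) ^ 2) t)
    (hodew : ∀ t : ℝ, HasDerivAt w (-((z t) ^ 2 + z t * w t)) t) :
    Filter.Tendsto z Filter.atTop (nhds 0) ∧
    Filter.Tendsto w Filter.atTop (nhds 0) ∧
    Filter.Tendsto z Filter.atBot (nhds 0) ∧
    Filter.Tendsto w Filter.atBot (nhds 0) ∧
    Filter.Tendsto (fun t => z t / w t) Filter.atTop (nhds 0) ∧
    Filter.Tendsto (fun t => z t / w t) Filter.atBot (nhds 0) := by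
  have hz₀0 : z₀ ≠ 0 := fun h => hz₀ (by simp [h])
  set c : ℂ := z₀⁻¹ with hc
  have hcim : c.im ≠ 0 := by
    rw [hc, Complex.inv_im]
    simp only [ne_eq, neg_div, neg_eq_zero, div_eq_zero_iff, not_or]
    exact ⟨hz₀, fun h => hz₀0 (Complex.normSq_eq_zero.mp h)⟩
  have him : ∀ t : ℝ, ((c + (t : ℂ)).im) = c.im := by intro t; simp
  have hct : ∀ t : ℝ, (c + (t : ℂ)) ≠ 0 := by
    intro t h
    apply hcim
    rw [← him t, h, Complex.zero_im]
  have hslit : ∀ t : ℝ, (c + (t : ℂ)) ∈ Complex.slitPlane := fun t =>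
    Complex.mem_slitPlane_iff.mpr (Or.inr (by rw [him t]; exact hcim))
  -- derivative of t ↦ c + t
  have hre : ∀ t : ℝ, HasDerivAt (fun s : ℝ => c + (s : ℂ)) 1 t := by
    intro t
    simpa using ((hasDerivAt_id t).ofReal_comp).const_add c
  -- derivative of t ↦ (c+t)⁻¹
  have hzt : ∀ t : ℝ, HasDerivAt (fun s : ℝ => (c + (s : ℂ))⁻¹) (-((c + (t : ℂ))⁻¹) ^ 2) t := by
    intro t
    have h := (hasDerivAt_inv (hct t)).scomp t (hre t)
    simpa [Function.comp_def, inv_pow] using h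
  have hzc : Continuous z := continuous_iff_continuousAt.mpr fun t => (hodez t).continuousAt
  have hinvc : Continuous (fun s : ℝ => (c + (s : ℂ))⁻¹) :=
    (continuous_const.add Complex.continuous_ofReal).inv₀ hct
  -- integrating factor exponent
  set φ : ℝ → ℂ := fun t => ∫ s in (0 : ℝ)..t, (z s + (c + (s : ℂ))⁻¹) with hφdef
  have hφ : ∀ t : ℝ, HasDerivAt φ (z t + (c + (t : ℂ))⁻¹) t := by
    intro t
    exact intervalIntegral.integral_hasDerivAt_right
      ((hzc.add hinvc).intervalIntegrable _ _)
      ((hzc.add hinvc).stronglyMeasurable.stronglyMeasurableAtFilter)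
      (hzc.add hinvc).continuousAt
  -- the function F vanishes identically, giving z t = (c+t)⁻¹
  set F : ℝ → ℂ := fun t => (z t - (c + (t : ℂ))⁻¹) * Complex.exp (φ t) with hFdef
  have hF : ∀ t : ℝ, HasDerivAt F 0 t := by
    intro t
    have h1 : HasDerivAt (fun s : ℝ => z s - (c + (s : ℂ))⁻¹)
        (-(z t) ^ 2 - -((c + (t : ℂ))⁻¹) ^ 2) t := (hodez t).sub (hzt t)
    have h2 : HasDerivAt (fun s : ℝ => Complex.exp (φ s))
        (Complex.exp (φ t) * (z t + (c + (t : ℂ))⁻¹)) t := (hφ t).cexp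
    have h3 := h1.mul h2
    convert h3 using 1
    all_goals try rfl
    ring
  have hFeq : ∀ t : ℝ, F t = 0 := by
    have hdiff : Differentiable ℝ F := fun t => (hF t).differentiableAt
    have hderiv : ∀ t, deriv F t = 0 := fun t => (hF t).deriv
    intro t
    have := is_const_of_deriv_eq_zero hdiff hderiv t 0
    rw [this]
    have hφ0 : φ 0 = 0 := by simp [hφdef]
    have : (c + ((0 : ℝ) : ℂ))⁻¹ = z₀ := by simp [hc]
    simp [hFdef, hφ0, hz0, this, hc, inv_inv]
  have hzeq : ∀ t : ℝ, z t = (c + (t : ℂ))⁻¹ := by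
    intro t
    have := hFeq t
    rcases mul_eq_zero.mp this with h | h
    · exact sub_eq_zero.mp h
    · exact absurd h (Complex.exp_ne_zero _)
  -- the conserved quantity for w
  set K : ℂ := c * w₀ + Complex.log c with hK
  have hlogD : ∀ t : ℝ, HasDerivAt (fun s : ℝ => Complex.log (c + (s : ℂ)))
      ((c + (t : ℂ))⁻¹) t := by
    intro t
    have := (Complex.hasDerivAt_log (hslit t)).scomp t (hre t)
    convert this using 1
    all_goals try rfl
    simp
  have hkey : ∀ t : ℝ, (c + (t : ℂ)) * w t = K - Complex.log (c + (t : ℂ)) := by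
    set G : ℝ → ℂ := fun t => (c + (t : ℂ)) * w t + Complex.log (c + (t : ℂ)) with hGdef
    have hG : ∀ t : ℝ, HasDerivAt G 0 t := by
      intro t
      have h1 : HasDerivAt (fun s : ℝ => (c + (s : ℂ)) * w s)
          (1 * w t + (c + (t : ℂ)) * -((z t) ^ 2 + z t * w t)) t := (hre t).mul (hodew t)
      have h2 := h1.add (hlogD t)
      convert h2 using 1
      all_goals try rfl
      rw [hzeq t]
      field_simp [hct t]
      ring
    have hGconst : ∀ t : ℝ, G t = K := by
      intro t
      have hdiff : Differentiable ℝ G := fun t => (hG t).differentiableAt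
      have := is_const_of_deriv_eq_zero hdiff (fun t => (hG t).deriv) t 0
      rw [this]
      simp [hGdef, hw0, hK]
    intro t
    have := hGconst t
    rw [hGdef] at this
    linear_combination this
  -- main limit lemma along any filter where |c+t| → ∞
  have main : ∀ l : Filter ℝ, Tendsto (fun t : ℝ => ‖c + (t : ℂ)‖) l atTop →
      Tendsto z l (nhds 0) ∧ Tendsto w l (nhds 0) ∧
      Tendsto (fun t => z t / w t) l (nhds 0) := by
    intro l hn
    have hzl : Tendsto z l (nhds 0) := by
      rw [tendsto_zero_iff_norm_tendsto_zero]
      have : (fun t => ‖z t‖) = fun t : ℝ => (‖c + (t : ℂ)‖)⁻¹ := by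
        funext t; rw [hzeq t, norm_inv]
      rw [this]
      exact hn.inv_tendsto_atTop
    have hlogle : ∀ t : ℝ, ‖Complex.log (c + (t : ℂ))‖ ≤
        |Real.log ‖c + (t : ℂ)‖| + Real.pi := by
      intro t
      have h1 : ‖Complex.log (c + (t : ℂ))‖ ≤
          |(Complex.log (c + (t : ℂ))).re| + |(Complex.log (c + (t : ℂ))).im| := by
        simpa using
          Complex.norm_le_abs_re_add_abs_im (Complex.log (c + (t : ℂ)))
      rw [Complex.log_re, Complex.log_im] at h1
      calc ‖Complex.log (c + (t : ℂ))‖ ≤ _ := h1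
        _ ≤ |Real.log ‖c + (t : ℂ)‖| + Real.pi := by
            exact add_le_add_right (Complex.abs_arg_le_pi _) _
    have hwl : Tendsto w l (nhds 0) := by
      apply squeeze_zero_norm'
        (a := fun t : ℝ => (‖K‖ + (Real.log ‖c + (t : ℂ)‖ + Real.pi)) / ‖c + (t : ℂ)‖)
      · filter_upwards [hn.eventually_ge_atTop 1] with t ht
        have hwt : w t = (K - Complex.log (c + (t : ℂ))) / (c + (t : ℂ)) := by
          rw [eq_div_iff (hct t), mul_comm]
          exact hkey t
        rw [hwt, norm_div]
        have hpos : (0 : ℝ) < ‖c + (t : ℂ)‖ := lt_of_lt_of_le one_pos ht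
        apply (div_le_div_iff_of_pos_right hpos).mpr
        calc ‖K - Complex.log (c + (t : ℂ))‖
            ≤ ‖K‖ + ‖Complex.log (c + (t : ℂ))‖ := norm_sub_le _ _
          _ ≤ ‖K‖ + (|Real.log ‖c + (t : ℂ)‖| + Real.pi) := add_le_add_right (hlogle t) _
          _ = ‖K‖ + (Real.log ‖c + (t : ℂ)‖ + Real.pi) := by
              rw [_root_.abs_of_nonneg (Real.log_nonneg ht)]
      · have h1 : Tendsto (fun r : ℝ => (‖K‖ + Real.pi) / r + Real.log r / r)
            atTop (nhds 0) := by
          have ha := Real.isLittleO_log_id_atTop.tendsto_div_nhds_zero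
          have hb : Tendsto (fun r : ℝ => (‖K‖ + Real.pi) / r) atTop (nhds 0) :=
            tendsto_const_nhds.div_atTop tendsto_id
          simpa using hb.add ha
        have h2 := h1.comp hn
        convert h2 using 2 with t
        simp only [Function.comp]
        ring
    have hbig : Tendsto (fun t : ℝ => ‖K - Complex.log (c + (t : ℂ))‖) l atTop := by
      apply tendsto_atTop_mono ?_
        (tendsto_atTop_add_const_right l (-‖K‖) (Real.tendsto_log_atTop.comp hn))
      intro t
      simp only [Function.comp]
      have h1 : Real.log ‖c + (t : ℂ)‖ ≤ ‖Complex.log (c + (t : ℂ))‖ := by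
        calc Real.log ‖c + (t : ℂ)‖ ≤ |Real.log ‖c + (t : ℂ)‖| := le_abs_self _
          _ = |(Complex.log (c + (t : ℂ))).re| := by rw [Complex.log_re]
          _ ≤ ‖Complex.log (c + (t : ℂ))‖ := by
              exact Complex.abs_re_le_norm _
      have h2 : ‖Complex.log (c + (t : ℂ))‖ - ‖K‖ ≤ ‖K - Complex.log (c + (t : ℂ))‖ := by
        rw [norm_sub_rev]
        exact (norm_sub_norm_le _ _)
      linarith
    have hql : Tendsto (fun t => z t / w t) l (nhds 0) := by
      have heq : (fun t => z t / w t) = fun t : ℝ => (K - Complex.log (c + (t : ℂ)))⁻¹ := by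
        funext t
        rw [hzeq t, div_eq_mul_inv, ← mul_inv, hkey t]
      rw [heq, tendsto_zero_iff_norm_tendsto_zero]
      have : (fun t : ℝ => ‖(K - Complex.log (c + (t : ℂ)))⁻¹‖) =
          fun t : ℝ => (‖K - Complex.log (c + (t : ℂ))‖)⁻¹ := by
        funext t; rw [norm_inv]
      rw [this]
      exact hbig.inv_tendsto_atTop
    exact ⟨hzl, hwl, hql⟩
  have habs : ∀ t : ℝ, |c.re + t| ≤ ‖c + (t : ℂ)‖ := by
    intro t
    have := Complex.abs_re_le_norm (c + (t : ℂ))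
    simpa [Complex.add_re, Complex.ofReal_re] using this
  have hTop : Tendsto (fun t : ℝ => ‖c + (t : ℂ)‖) atTop atTop := by
    apply tendsto_atTop_mono habs
    exact tendsto_abs_atTop_atTop.comp (tendsto_atTop_add_const_left _ _ tendsto_id)
  have hBot : Tendsto (fun t : ℝ => ‖c + (t : ℂ)‖) atBot atTop := by
    apply tendsto_atTop_mono habs
    exact tendsto_abs_atBot_atTop.comp (tendsto_atBot_add_const_left _ _ tendsto_id)
  obtain ⟨h1, h2, h3⟩ := main atTop hTop
  obtain ⟨h4, h5, h6⟩ := main atBot hBot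
  exact ⟨h1, h2, h4, h5, h3, h6⟩
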